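/- Correspondence between Poincaré and 2D hyperboloid distributions: for a real 2×2 symmetric positive-definite matrix θ = [[a,b],[b,c]], let θ_L := (a+c, a−c, 2b). Then (i) for all such θ, θ′: [θ_L,θ_L] = 4·det θ, [θ′_L,θ′_L] = 4·det θ′, and [θ_L,θ′_L] = 2·(det θ)·tr(θ′θ⁻¹); and (ii) for every convex f : (0,∞) → ℝ with f(1) = 0, the f-divergence between the 2D hyperboloid distributions with parameters θ_L and θ′_L equals the f-divergence between the Poincaré distributions with parameters θ and θ′: D_f[p_{θ_L} : p_{θ′_L}] = D_f[p_θ : p_{θ′}]. -/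

import Mathlib

open MeasureTheory Matrix

/-- The Poincaré density on the upper half-plane, as a density on `ℝ × ℝ`
(vanishing for `y ≤ 0`), indexed by a 2×2 symmetric positive-definite matrix. -/
noncomputable def poincareDensity (θ : Matrix (Fin 2) (Fin 2) ℝ) (z : ℝ × ℝ) : ℝ :=
  if 0 < z.2 then
    Real.sqrt θ.det * Real.exp (2 * Real.sqrt θ.det) / Real.pi *
      Real.exp (-(θ 0 0 * (z.1 ^ 2 + z.2 ^ 2) + 2 * θ 0 1 * z.1 + θ 1 1) / z.2) / z.2 ^ 2
  else 0

/-- The `f`-divergence between two densities on the upper half-plane. -/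
noncomputable def fDivH (f : ℝ → ℝ) (p q : ℝ × ℝ → ℝ) : ℝ :=
  ∫ z in {w : ℝ × ℝ | 0 < w.2}, p z * f (q z / p z)

/-- The Minkowski inner product on ℝ³ (as ℝ × ℝ × ℝ). -/
noncomputable def mink3 (θ η : ℝ × ℝ × ℝ) : ℝ :=
  θ.1 * η.1 - θ.2.1 * η.2.1 - θ.2.2 * η.2.2

/-- The Minkowski norm |θ| = √(θ₀²−θ₁²−θ₂²). -/
noncomputable def mnorm (θ : ℝ × ℝ × ℝ) : ℝ :=
  Real.sqrt (θ.1 ^ 2 - θ.2.1 ^ 2 - θ.2.2 ^ 2)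

/-- The parameter space condition θ₀ > √(θ₁²+θ₂²). -/
def inHypParam (θ : ℝ × ℝ × ℝ) : Prop :=
  Real.sqrt (θ.2.1 ^ 2 + θ.2.2 ^ 2) < θ.1

/-- The density of the 2D hyperboloid distribution on ℝ². -/
noncomputable def hypDensity2 (θ : ℝ × ℝ × ℝ) (x : ℝ × ℝ) : ℝ :=
  mnorm θ * Real.exp (mnorm θ) / (2 * Real.pi) *
    Real.exp (-(θ.1 * Real.sqrt (1 + x.1 ^ 2 + x.2 ^ 2) - θ.2.1 * x.1 - θ.2.2 * x.2)) /
      Real.sqrt (1 + x.1 ^ 2 + x.2 ^ 2)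

/-- The f-divergence between two densities on ℝ². -/
noncomputable def fDivL (f : ℝ → ℝ) (p q : ℝ × ℝ → ℝ) : ℝ :=
  ∫ z : ℝ × ℝ, p z * f (q z / p z)

/-- The correspondence θ = [[a,b],[b,c]] ↦ θ_L = (a+c, a−c, 2b). -/
noncomputable def toHyp (θ : Matrix (Fin 2) (Fin 2) ℝ) : ℝ × ℝ × ℝ :=
  (θ 0 0 + θ 1 1, θ 0 0 - θ 1 1, 2 * θ 0 1)

/-! ### Auxiliary machinery: the change of variables between the upper half-plane and ℝ². -/

/-- The map `(x, y) ↦ ((1 − x² − y²)/(2y), −x/y)` from the upper half-plane onto ℝ². -/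
noncomputable def Tmap : ℝ × ℝ → ℝ × ℝ :=
  fun z => ((1 - z.1 ^ 2 - z.2 ^ 2) / (2 * z.2), -z.1 / z.2)

/-- The inverse of `Tmap`. -/
noncomputable def Smap : ℝ × ℝ → ℝ × ℝ :=
  fun w => (-w.2 / (Real.sqrt (1 + w.1 ^ 2 + w.2 ^ 2) + w.1),
    1 / (Real.sqrt (1 + w.1 ^ 2 + w.2 ^ 2) + w.1))

/-- The derivative of `Tmap`. -/
noncomputable def Tderiv (z : ℝ × ℝ) : (ℝ × ℝ) →L[ℝ] (ℝ × ℝ) :=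
  LinearMap.toContinuousLinearMap (Matrix.toLin (Module.Basis.finTwoProd ℝ) (Module.Basis.finTwoProd ℝ)
    !![-z.1 / z.2, (z.1 ^ 2 - z.2 ^ 2 - 1) / (2 * z.2 ^ 2); -(1 / z.2), z.1 / z.2 ^ 2])

lemma Tderiv_det (z : ℝ × ℝ) (hz : 0 < z.2) :
    |(Tderiv z).det| = (z.1 ^ 2 + z.2 ^ 2 + 1) / (2 * z.2 ^ 3) := by
  have h : (Tderiv z).det =
      (!![-z.1 / z.2, (z.1 ^ 2 - z.2 ^ 2 - 1) / (2 * z.2 ^ 2); -(1 / z.2), z.1 / z.2 ^ 2]).det := by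
    rw [Tderiv]
    rw [ContinuousLinearMap.det, LinearMap.coe_toContinuousLinearMap, LinearMap.det_toLin]
  rw [h, Matrix.det_fin_two_of]
  have h2 : z.2 ≠ 0 := ne_of_gt hz
  have h3 : -z.1 / z.2 * (z.1 / z.2 ^ 2) - (z.1 ^ 2 - z.2 ^ 2 - 1) / (2 * z.2 ^ 2) * -(1 / z.2)
      = -((z.1 ^ 2 + z.2 ^ 2 + 1) / (2 * z.2 ^ 3)) := by field_simp; ring
  rw [h3, abs_neg, abs_of_pos (by positivity)]

lemma hasFDerivAt_Tmap (z : ℝ × ℝ) (hz : 0 < z.2) : HasFDerivAt Tmap (Tderiv z) z := by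
  have h2 : z.2 ≠ 0 := ne_of_gt hz
  have h2' : 2 * z.2 ≠ 0 := by positivity
  rw [Tderiv, Matrix.toLin_finTwoProd_toContinuousLinearMap]
  have hfst : HasFDerivAt (fun p : ℝ × ℝ => p.1) (ContinuousLinearMap.fst ℝ ℝ ℝ) z :=
    hasFDerivAt_fst
  have hsnd : HasFDerivAt (fun p : ℝ × ℝ => p.2) (ContinuousLinearMap.snd ℝ ℝ ℝ) z :=
    hasFDerivAt_snd
  have hnum : HasFDerivAt (fun p : ℝ × ℝ => 1 - p.1 ^ 2 - p.2 ^ 2)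
      ((-(2 * z.1)) • ContinuousLinearMap.fst ℝ ℝ ℝ +
        (-(2 * z.2)) • ContinuousLinearMap.snd ℝ ℝ ℝ) z := by
    have ha := hfst.mul hfst
    have hb := hsnd.mul hsnd
    have hc := ((hasFDerivAt_const (1:ℝ) z).sub ha).sub hb
    simp only [pow_two]
    refine hc.congr_fderiv ?_
    refine ContinuousLinearMap.ext fun p => ?_
    simp only [ContinuousLinearMap.add_apply, ContinuousLinearMap.smul_apply,
      ContinuousLinearMap.sub_apply, ContinuousLinearMap.zero_apply,
      ContinuousLinearMap.coe_fst', ContinuousLinearMap.coe_snd', smul_eq_mul]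
    ring
  have hden : HasFDerivAt (fun p : ℝ × ℝ => 2 * p.2)
      ((2:ℝ) • ContinuousLinearMap.snd ℝ ℝ ℝ) z := hsnd.const_mul (2:ℝ)
  have hinv : HasFDerivAt (fun p : ℝ × ℝ => (2 * p.2)⁻¹)
      ((-((2 * z.2) ^ 2)⁻¹) • ((2:ℝ) • ContinuousLinearMap.snd ℝ ℝ ℝ)) z :=
    (hasDerivAt_inv h2').comp_hasFDerivAt z hden
  have h1 : HasFDerivAt (fun p : ℝ × ℝ => (1 - p.1 ^ 2 - p.2 ^ 2) / (2 * p.2))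
      ((-z.1 / z.2) • ContinuousLinearMap.fst ℝ ℝ ℝ +
        ((z.1 ^ 2 - z.2 ^ 2 - 1) / (2 * z.2 ^ 2)) • ContinuousLinearMap.snd ℝ ℝ ℝ) z := by
    simp only [div_eq_mul_inv]
    refine (hnum.mul hinv).congr_fderiv ?_
    refine ContinuousLinearMap.ext fun p => ?_
    simp only [ContinuousLinearMap.add_apply, ContinuousLinearMap.smul_apply,
      ContinuousLinearMap.coe_fst', ContinuousLinearMap.coe_snd', smul_eq_mul]
    field_simp
    ring
  have hinv2 : HasFDerivAt (fun p : ℝ × ℝ => (p.2)⁻¹)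
      ((-(z.2 ^ 2)⁻¹) • (ContinuousLinearMap.snd ℝ ℝ ℝ)) z :=
    (hasDerivAt_inv h2).comp_hasFDerivAt z hsnd
  have hx : HasFDerivAt (fun p : ℝ × ℝ => -p.1 / p.2)
      ((-(1 / z.2)) • ContinuousLinearMap.fst ℝ ℝ ℝ +
        (z.1 / z.2 ^ 2) • ContinuousLinearMap.snd ℝ ℝ ℝ) z := by
    simp only [div_eq_mul_inv]
    refine (hfst.neg.mul hinv2).congr_fderiv ?_
    refine ContinuousLinearMap.ext fun p => ?_
    simp only [ContinuousLinearMap.add_apply, ContinuousLinearMap.smul_apply,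
      ContinuousLinearMap.coe_fst', ContinuousLinearMap.coe_snd', smul_eq_mul,
      ContinuousLinearMap.neg_apply, Pi.neg_apply]
    field_simp
    ring
  exact HasFDerivAt.prodMk h1 hx

lemma Tmap_sq (z : ℝ × ℝ) (hz : 0 < z.2) :
    1 + (Tmap z).1 ^ 2 + (Tmap z).2 ^ 2 = ((z.1 ^ 2 + z.2 ^ 2 + 1) / (2 * z.2)) ^ 2 := by
  have h2 : z.2 ≠ 0 := ne_of_gt hz
  simp only [Tmap]
  field_simp
  ring

lemma Tmap_sqrt (z : ℝ × ℝ) (hz : 0 < z.2) :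
    Real.sqrt (1 + (Tmap z).1 ^ 2 + (Tmap z).2 ^ 2) = (z.1 ^ 2 + z.2 ^ 2 + 1) / (2 * z.2) := by
  rw [Tmap_sq z hz, Real.sqrt_sq (by positivity)]

lemma Smap_Tmap (z : ℝ × ℝ) (hz : 0 < z.2) : Smap (Tmap z) = z := by
  have h2 : z.2 ≠ 0 := ne_of_gt hz
  have hs : Real.sqrt (1 + (Tmap z).1 ^ 2 + (Tmap z).2 ^ 2) + (Tmap z).1 = 1 / z.2 := by
    rw [Tmap_sqrt z hz]
    show (z.1 ^ 2 + z.2 ^ 2 + 1) / (2 * z.2) + (1 - z.1 ^ 2 - z.2 ^ 2) / (2 * z.2) = 1 / z.2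
    rw [← add_div]
    rw [show z.1 ^ 2 + z.2 ^ 2 + 1 + (1 - z.1 ^ 2 - z.2 ^ 2) = 2 by ring]
    rw [show (2 : ℝ) * z.2 = z.2 * 2 by ring]
    rw [div_mul_eq_div_div_swap]
    norm_num
  ext
  · show -(Tmap z).2 / _ = z.1
    rw [hs]
    show -(-z.1 / z.2) / (1 / z.2) = z.1
    field_simp
  · show 1 / _ = z.2
    rw [hs]
    field_simp

lemma sqrt_add_fst_pos (w : ℝ × ℝ) : 0 < Real.sqrt (1 + w.1 ^ 2 + w.2 ^ 2) + w.1 := by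
  have ht : Real.sqrt (w.1 ^ 2) ≤ Real.sqrt (1 + w.1 ^ 2 + w.2 ^ 2) :=
    Real.sqrt_le_sqrt (by nlinarith [sq_nonneg w.2])
  have habs : |w.1| ≤ Real.sqrt (1 + w.1 ^ 2 + w.2 ^ 2) := by
    rwa [Real.sqrt_sq_eq_abs] at ht
  have hlt : |w.1| < Real.sqrt (1 + w.1 ^ 2 + w.2 ^ 2) := by
    rcases lt_or_eq_of_le habs with h | h
    · exact h
    · exfalso
      have := Real.sq_sqrt (by positivity : (0:ℝ) ≤ 1 + w.1 ^ 2 + w.2 ^ 2)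
      rw [← h, sq_abs] at this
      nlinarith [sq_nonneg w.2]
  have := neg_abs_le w.1
  linarith

lemma Smap_snd_pos (w : ℝ × ℝ) : 0 < (Smap w).2 := by
  have := sqrt_add_fst_pos w
  show 0 < 1 / _
  positivity

lemma Tmap_Smap (w : ℝ × ℝ) : Tmap (Smap w) = w := by
  set t := Real.sqrt (1 + w.1 ^ 2 + w.2 ^ 2) with hts
  have ht2 : t ^ 2 = 1 + w.1 ^ 2 + w.2 ^ 2 := Real.sq_sqrt (by positivity)
  have hpos : 0 < t + w.1 := sqrt_add_fst_pos w
  have hne : t + w.1 ≠ 0 := ne_of_gt hpos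
  ext
  · show (1 - (-w.2 / (t + w.1)) ^ 2 - (1 / (t + w.1)) ^ 2) / (2 * (1 / (t + w.1))) = w.1
    field_simp
    nlinarith [ht2]
  · show -(-w.2 / (t + w.1)) / (1 / (t + w.1)) = w.2
    field_simp

lemma sym_of_posdef {θ : Matrix (Fin 2) (Fin 2) ℝ} (hθ : θ.PosDef) : θ 1 0 = θ 0 1 := by
  have := hθ.1.apply 0 1
  simpa using this

lemma mnorm_toHyp (θ : Matrix (Fin 2) (Fin 2) ℝ) (h : θ 1 0 = θ 0 1) :
    mnorm (toHyp θ) = 2 * Real.sqrt θ.det := by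
  rw [mnorm, toHyp]
  have h4 : (θ 0 0 + θ 1 1) ^ 2 - (θ 0 0 - θ 1 1) ^ 2 - (2 * θ 0 1) ^ 2 = 2 ^ 2 * θ.det := by
    rw [Matrix.det_fin_two, h]; ring
  rw [h4, Real.sqrt_mul (by norm_num), Real.sqrt_sq (by norm_num)]

lemma keyDensity (θ : Matrix (Fin 2) (Fin 2) ℝ) (h : θ 1 0 = θ 0 1) (z : ℝ × ℝ)
    (hz : 0 < z.2) :
    hypDensity2 (toHyp θ) (Tmap z) * ((z.1 ^ 2 + z.2 ^ 2 + 1) / (2 * z.2 ^ 3)) =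
      poincareDensity θ z := by
  have h2 : z.2 ≠ 0 := ne_of_gt hz
  have hq : z.1 ^ 2 + z.2 ^ 2 + 1 ≠ 0 := by positivity
  rw [poincareDensity, if_pos hz, hypDensity2, Tmap_sqrt z hz, mnorm_toHyp θ h]
  have hexp : Real.exp (-((toHyp θ).1 * ((z.1 ^ 2 + z.2 ^ 2 + 1) / (2 * z.2)) -
        (toHyp θ).2.1 * (Tmap z).1 - (toHyp θ).2.2 * (Tmap z).2)) =
      Real.exp (-(θ 0 0 * (z.1 ^ 2 + z.2 ^ 2) + 2 * θ 0 1 * z.1 + θ 1 1) / z.2) := by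
    congr 1
    simp only [toHyp, Tmap]
    field_simp
    ring
  rw [hexp]
  field_simp [Real.pi_ne_zero]

/-- correspondence between Poincaré and 2D hyperboloid distributions:
(i) the Minkowski products of the transformed parameters are the canonical terms of the
Poincaré parameters, and (ii) f-divergences agree. -/
theorem poincare_hyperboloid_correspondence :
    (∀ θ θ' : Matrix (Fin 2) (Fin 2) ℝ, θ.PosDef → θ'.PosDef →
      mink3 (toHyp θ) (toHyp θ) = 4 * θ.det ∧
      mink3 (toHyp θ') (toHyp θ') = 4 * θ'.det ∧
      mink3 (toHyp θ) (toHyp θ') = 2 * θ.det * (θ' * θ⁻¹).trace) ∧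
    (∀ θ θ' : Matrix (Fin 2) (Fin 2) ℝ, θ.PosDef → θ'.PosDef →
      ∀ f : ℝ → ℝ, ConvexOn ℝ (Set.Ioi 0) f → f 1 = 0 →
      fDivL f (hypDensity2 (toHyp θ)) (hypDensity2 (toHyp θ')) =
        fDivH f (poincareDensity θ) (poincareDensity θ')) := by
  constructor
  · intro θ θ' hθ hθ'
    refine ⟨?_, ?_, ?_⟩
    · rw [mink3, toHyp, Matrix.det_fin_two, sym_of_posdef hθ]; ring
    · rw [mink3, toHyp, Matrix.det_fin_two, sym_of_posdef hθ']; ring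
    · have hd : θ.det ≠ 0 := ne_of_gt hθ.det_pos
      rw [mink3, toHyp, toHyp, Matrix.trace_fin_two, Matrix.inv_def, Matrix.adjugate_fin_two]
      simp only [Matrix.mul_apply, Fin.sum_univ_two, Matrix.smul_apply, Ring.inverse_eq_inv,
        smul_eq_mul, Matrix.of_apply, Matrix.cons_val', Matrix.cons_val_zero, Matrix.cons_val_one,
        Matrix.head_cons, Matrix.empty_val', Matrix.cons_val_fin_one, Matrix.head_fin_const]
      rw [Matrix.det_fin_two, sym_of_posdef hθ, sym_of_posdef hθ']
      have hd2 : θ 0 0 * θ 1 1 - θ 0 1 * θ 0 1 ≠ 0 := by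
        rw [Matrix.det_fin_two, sym_of_posdef hθ] at hd; exact hd
      have hd3 : θ 0 0 * θ 1 1 - θ 0 1 ^ 2 ≠ 0 := by rw [sq]; exact hd2
      field_simp
      ring
  · intro θ θ' hθ hθ' f hf hf1
    have hsym := sym_of_posdef hθ
    have hsym' := sym_of_posdef hθ'
    set s : Set (ℝ × ℝ) := {w : ℝ × ℝ | 0 < w.2} with hsdef
    have hs : MeasurableSet s := (isOpen_lt continuous_const continuous_snd).measurableSet
    have himg : Tmap '' s = Set.univ :=
      Set.eq_univ_of_forall fun w => ⟨Smap w, Smap_snd_pos w, Tmap_Smap w⟩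
    have hinj : Set.InjOn Tmap s := fun a ha b hb hab => by
      rw [← Smap_Tmap a ha, hab, Smap_Tmap b hb]
    have hder : ∀ z ∈ s, HasFDerivWithinAt Tmap (Tderiv z) s z := fun z hz =>
      (hasFDerivAt_Tmap z hz).hasFDerivWithinAt
    set g : ℝ × ℝ → ℝ := fun w =>
      hypDensity2 (toHyp θ) w * f (hypDensity2 (toHyp θ') w / hypDensity2 (toHyp θ) w) with hg
    have step1 : fDivL f (hypDensity2 (toHyp θ)) (hypDensity2 (toHyp θ')) = ∫ w in Tmap '' s, g w := by
      rw [himg, setIntegral_univ]; rfl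
    rw [step1, integral_image_eq_integral_abs_det_fderiv_smul volume hs hder hinj g]
    rw [fDivH]
    refine setIntegral_congr_fun hs fun z hz => ?_
    have hz2 : 0 < z.2 := hz
    have hJ : |(Tderiv z).det| = (z.1 ^ 2 + z.2 ^ 2 + 1) / (2 * z.2 ^ 3) := Tderiv_det z hz2
    have hJpos : 0 < (z.1 ^ 2 + z.2 ^ 2 + 1) / (2 * z.2 ^ 3) := by positivity
    have hp := keyDensity θ hsym z hz2
    have hq := keyDensity θ' hsym' z hz2
    have hratio : hypDensity2 (toHyp θ') (Tmap z) / hypDensity2 (toHyp θ) (Tmap z) =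
        poincareDensity θ' z / poincareDensity θ z := by
      rw [← hp, ← hq, mul_div_mul_right _ _ (ne_of_gt hJpos)]
    show |(Tderiv z).det| • g (Tmap z) = _
    rw [hJ, smul_eq_mul, hg]
    simp only
    rw [hratio, ← hp]
    ring
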